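/- Let φ : (0,∞) → (0,∞) be non-increasing, let s ≤ 0, and suppose there are constants A > 0 and a > s such that φ(r₂)/φ(r₁) ≥ A (r₂/r₁)^a for all 0 < r₁ < r₂. Then there is C > 0 such that C⁻¹ r^{−s} φ(r) ≤ ∫₀ʳ t^{−s−1} φ(t) dt ≤ C r^{−s} φ(r) for all r > 0. -/

import Mathlib

open MeasureTheory
open scoped ENNReal

/-- Let `φ : (0,∞) → (0,∞)` be non-increasing, `s ≤ 0`, and suppose there
are `A > 0`, `a > s` with `φ(r₂)/φ(r₁) ≥ A (r₂/r₁)^a` for all `0 < r₁ < r₂`. Then there is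
`C > 0` with `C⁻¹ r^{−s} φ(r) ≤ ∫₀ʳ t^{−s−1} φ(t) dt ≤ C r^{−s} φ(r)` for all `r > 0`. -/
theorem statement10 (φ : ℝ → ℝ) (hpos : ∀ r : ℝ, 0 < r → 0 < φ r)
    (hmono : ∀ r1 r2 : ℝ, 0 < r1 → r1 ≤ r2 → φ r2 ≤ φ r1)
    (s : ℝ) (hs : s ≤ 0) (A a : ℝ) (hA : 0 < A) (ha : s < a)
    (hscal : ∀ r1 r2 : ℝ, 0 < r1 → r1 < r2 → A * (r2 / r1) ^ a ≤ φ r2 / φ r1) :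
    ∃ C : ℝ, 0 < C ∧ ∀ r : ℝ, 0 < r →
      C⁻¹ * (r ^ (-s) * φ r) ≤ (∫ t in Set.Ioo (0 : ℝ) r, t ^ (-s - 1) * φ t) ∧
      (∫ t in Set.Ioo (0 : ℝ) r, t ^ (-s - 1) * φ t) ≤ C * (r ^ (-s) * φ r) := by
  have has : 0 < a - s := sub_pos.mpr ha
  set C : ℝ := max (A⁻¹ * (a - s)⁻¹) ((2 : ℝ) ^ (1 - s)) with hCdef
  have hCpos : 0 < C := lt_of_lt_of_le (Real.rpow_pos_of_pos two_pos _) (le_max_right _ _)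
  refine ⟨C, hCpos, fun r hr => ?_⟩
  have hφr : 0 < φ r := hpos r hr
  have hrs : (0 : ℝ) < r ^ (-s) * φ r := mul_pos (Real.rpow_pos_of_pos hr _) hφr
  -- measurability
  have hanti : AntitoneOn φ (Set.Ioo (0 : ℝ) r) := fun x hx y _ hxy => hmono x y hx.1 hxy
  have hφm : AEMeasurable φ (volume.restrict (Set.Ioo (0 : ℝ) r)) :=
    aemeasurable_restrict_of_antitoneOn measurableSet_Ioo hanti
  have hrpm : Measurable (fun t : ℝ => t ^ (-s - 1)) := by fun_prop
  have hgm : AEMeasurable (fun t => t ^ (-s - 1) * φ t)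
      (volume.restrict (Set.Ioo (0 : ℝ) r)) := hrpm.aemeasurable.mul hφm
  -- the pointwise upper bound from the scaling hypothesis
  set c : ℝ := A⁻¹ * r ^ (-a) * φ r with hcdef
  have hcpos : 0 < c :=
    mul_pos (mul_pos (inv_pos.mpr hA) (Real.rpow_pos_of_pos hr _)) hφr
  have hbound : ∀ t ∈ Set.Ioo (0 : ℝ) r,
      t ^ (-s - 1) * φ t ≤ c * t ^ (a - s - 1) := by
    intro t ht
    have htpos : 0 < t := ht.1
    have hφt : 0 < φ t := hpos t htpos
    have h1 : A * (r / t) ^ a ≤ φ r / φ t := hscal t r htpos ht.2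
    have h2 : φ t ≤ A⁻¹ * (t / r) ^ a * φ r := by
      have hrt : (r / t) ^ a = ((t / r) ^ a)⁻¹ := by
        rw [← Real.inv_rpow (by positivity), inv_div]
      rw [hrt] at h1
      have htr : (0 : ℝ) < (t / r) ^ a := Real.rpow_pos_of_pos (by positivity) _
      have h1' : A * ((t / r) ^ a)⁻¹ * φ t ≤ φ r := by
        have := mul_le_mul_of_nonneg_right h1 hφt.le
        rwa [div_mul_cancel₀ _ (ne_of_gt hφt)] at this
      calc φ t = A⁻¹ * (t / r) ^ a * (A * ((t / r) ^ a)⁻¹ * φ t) := by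
            field_simp
        _ ≤ A⁻¹ * (t / r) ^ a * φ r := by
            apply mul_le_mul_of_nonneg_left h1' (by positivity)
    have h3 : (t / r) ^ a = t ^ a * r ^ (-a) := by
      rw [Real.div_rpow htpos.le hr.le, Real.rpow_neg hr.le, div_eq_mul_inv]
    have h4 : t ^ (-s - 1) * t ^ a = t ^ (a - s - 1) := by
      rw [← Real.rpow_add htpos]; ring_nf
    calc t ^ (-s - 1) * φ t ≤ t ^ (-s - 1) * (A⁻¹ * (t / r) ^ a * φ r) := by
          apply mul_le_mul_of_nonneg_left h2 (Real.rpow_pos_of_pos htpos _).le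
      _ = c * t ^ (a - s - 1) := by rw [h3, hcdef, ← h4]; ring
  -- integrability of the dominating function and of the integrand
  have hdom : IntegrableOn (fun t : ℝ => c * t ^ (a - s - 1)) (Set.Ioo 0 r) := by
    have : IntervalIntegrable (fun t : ℝ => t ^ (a - s - 1)) volume 0 r :=
      intervalIntegral.intervalIntegrable_rpow' (by linarith)
    have h := (intervalIntegrable_iff_integrableOn_Ioo_of_le hr.le).mp this
    exact h.const_mul c
  have hgint : IntegrableOn (fun t => t ^ (-s - 1) * φ t) (Set.Ioo 0 r) := by
    refine hdom.integrable.mono hgm.aestronglyMeasurable ?_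
    filter_upwards [self_mem_ae_restrict (measurableSet_Ioo :
      MeasurableSet (Set.Ioo (0 : ℝ) r))] with t ht
    have htpos : 0 < t := ht.1
    have h0 : 0 ≤ t ^ (-s - 1) * φ t := by
      have := (hpos t htpos).le
      positivity
    rw [Real.norm_of_nonneg h0, Real.norm_of_nonneg
      (by have := Real.rpow_nonneg htpos.le (a - s - 1); positivity)]
    exact hbound t ht
  -- compute the integral of the dominating function
  have hdomval : (∫ t in Set.Ioo (0 : ℝ) r, c * t ^ (a - s - 1))
      = A⁻¹ * (a - s)⁻¹ * (r ^ (-s) * φ r) := by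
    rw [integral_const_mul, ← integral_Ioc_eq_integral_Ioo,
      ← intervalIntegral.integral_of_le hr.le, integral_rpow (Or.inl (by linarith))]
    have h0 : (0 : ℝ) ^ (a - s - 1 + 1) = 0 := Real.zero_rpow (by linarith)
    have hra : r ^ (-a) * r ^ (a - s - 1 + 1) = r ^ (-s) := by
      rw [← Real.rpow_add hr]; ring_nf
    rw [h0]
    rw [hcdef, ← hra]; ring
  constructor
  · -- lower bound
    have hsub : Set.Ioo (r / 2) r ⊆ Set.Ioo (0 : ℝ) r :=
      Set.Ioo_subset_Ioo (by positivity) le_rfl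
    set c0 : ℝ := (2 : ℝ) ^ s * r ^ (-s - 1) * φ r with hc0def
    have hlow : ∀ t ∈ Set.Ioo (r / 2) r, c0 ≤ t ^ (-s - 1) * φ t := by
      intro t ht
      have htpos : 0 < t := lt_trans (by positivity) ht.1
      have hφt : φ r ≤ φ t := hmono t r htpos ht.2.le
      have h1 : (r / 2) ^ (-s) ≤ t ^ (-s) :=
        Real.rpow_le_rpow (by positivity) ht.1.le (by linarith)
      have h2 : t⁻¹ ≥ r⁻¹ := by
        apply inv_anti₀ htpos ht.2.le
      have h3 : (r / 2) ^ (-s) = 2 ^ s * r ^ (-s) := by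
        rw [Real.div_rpow hr.le (by norm_num),
          Real.rpow_neg (by norm_num : (0:ℝ) ≤ 2) s, div_eq_mul_inv, inv_inv]; ring
      have h4 : t ^ (-s - 1) = t ^ (-s) * t⁻¹ := by
        rw [← Real.rpow_neg_one t, ← Real.rpow_add htpos]; ring_nf
      have h5 : r ^ (-s - 1) = r ^ (-s) * r⁻¹ := by
        rw [← Real.rpow_neg_one r, ← Real.rpow_add hr]; ring_nf
      have h6 : 2 ^ s * r ^ (-s - 1) ≤ t ^ (-s - 1) := by
        rw [h4, h5, ← mul_assoc]
        have := mul_le_mul (h3 ▸ h1) h2 (by positivity)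
          (Real.rpow_nonneg htpos.le _)
        exact le_trans (le_of_eq (by ring)) this
      calc c0 = 2 ^ s * r ^ (-s - 1) * φ r := rfl
        _ ≤ t ^ (-s - 1) * φ t :=
            mul_le_mul h6 hφt hφr.le (Real.rpow_nonneg htpos.le _)
    have hint2 : IntegrableOn (fun t => t ^ (-s - 1) * φ t) (Set.Ioo (r / 2) r) :=
      hgint.mono_set hsub
    have hconst : (∫ _ in Set.Ioo (r / 2) r, c0) = c0 * (r / 2) := by
      rw [setIntegral_const, Real.volume_real_Ioo_of_le (by linarith), smul_eq_mul]
      ring_nf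
    have hmono1 : (∫ _ in Set.Ioo (r / 2) r, c0)
        ≤ ∫ t in Set.Ioo (r / 2) r, t ^ (-s - 1) * φ t := by
      apply setIntegral_mono_on ((integrableOn_const_iff (C := c0)).mpr
        (Or.inr (by rw [Real.volume_Ioo]; exact ENNReal.ofReal_lt_top))) hint2
        measurableSet_Ioo hlow
    have hmono2 : (∫ t in Set.Ioo (r / 2) r, t ^ (-s - 1) * φ t)
        ≤ ∫ t in Set.Ioo (0 : ℝ) r, t ^ (-s - 1) * φ t := by
      apply setIntegral_mono_set hgint ?_ (HasSubset.Subset.eventuallyLE hsub)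
      filter_upwards [self_mem_ae_restrict (measurableSet_Ioo :
        MeasurableSet (Set.Ioo (0 : ℝ) r))] with t ht
      have := (hpos t ht.1).le
      have := ht.1
      positivity
    have hc0r : c0 * (r / 2) = 2 ^ (s - 1) * (r ^ (-s) * φ r) := by
      rw [hc0def]
      have h5 : r ^ (-s - 1) * r = r ^ (-s) := by
        nth_rewrite 2 [← Real.rpow_one r]
        rw [← Real.rpow_add hr]; ring_nf
      have h6 : (2 : ℝ) ^ (s - 1) = 2 ^ s * 2⁻¹ := by
        rw [← Real.rpow_neg_one 2, ← Real.rpow_add two_pos]; congr 1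
      rw [h6, ← h5]; ring
    have hCinv : C⁻¹ ≤ 2 ^ (s - 1) := by
      have h1 : (2 : ℝ) ^ (1 - s) ≤ C := le_max_right _ _
      have h2 : ((2 : ℝ) ^ (1 - s))⁻¹ = (2 : ℝ) ^ (s - 1) := by
        rw [← Real.rpow_neg (by norm_num : (0:ℝ) ≤ 2)]; congr 1; ring
      rw [← h2]
      exact inv_anti₀ (Real.rpow_pos_of_pos two_pos _) h1
    calc C⁻¹ * (r ^ (-s) * φ r) ≤ 2 ^ (s - 1) * (r ^ (-s) * φ r) :=
          mul_le_mul_of_nonneg_right hCinv hrs.le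
      _ = c0 * (r / 2) := hc0r.symm
      _ ≤ ∫ t in Set.Ioo (0 : ℝ) r, t ^ (-s - 1) * φ t := by
          rw [← hconst]; exact le_trans hmono1 hmono2
  · -- upper bound
    have h1 : (∫ t in Set.Ioo (0 : ℝ) r, t ^ (-s - 1) * φ t)
        ≤ ∫ t in Set.Ioo (0 : ℝ) r, c * t ^ (a - s - 1) :=
      setIntegral_mono_on hgint hdom measurableSet_Ioo hbound
    have h2 : A⁻¹ * (a - s)⁻¹ ≤ C := le_max_left _ _
    calc (∫ t in Set.Ioo (0 : ℝ) r, t ^ (-s - 1) * φ t)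
        ≤ A⁻¹ * (a - s)⁻¹ * (r ^ (-s) * φ r) := by rw [← hdomval]; exact h1
      _ ≤ C * (r ^ (-s) * φ r) := mul_le_mul_of_nonneg_right h2 hrs.le
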